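/- Let k₁ > k₂ > 0, let b₁, b₂, ψ₁ ∈ ℝ, set H = (k₁ − k₂)/(k₁ + k₂), and define ξᵢ(y) = kᵢ·y + bᵢ for i = 1, 2. Then for all y ∈ ℝ, Wr₃( 1 + H⁴·e^{2ξ₁ − ψ₁}, e^{ξ₁}, e^{−ξ₂} )(y) = −(k₁ + k₂)·e^{ξ₁(y) − ξ₂(y)}·[ (k₁k₂ + 2k₁²)·H⁴·e^{2ξ₁(y) − ψ₁} − k₁k₂ ]. -/
import Mathlib

private lemma hd_aff (c d : ℝ) : ∀ y : ℝ, HasDerivAt (fun y : ℝ => c * y + d) c y := by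
  intro y
  simpa using ((hasDerivAt_id y).const_mul c).add_const d

/-- explicit evaluation of the third-order Wronskian `Ĵ₁`
appearing in the count of negative eigenvalues of the Hessian. -/
theorem wronskian_J1hat (k₁ k₂ b₁ b₂ ψ₁ H : ℝ)
    (hk₂ : 0 < k₂) (hk : k₂ < k₁)
    (hH : H = (k₁ - k₂) / (k₁ + k₂))
    (ξ₁ ξ₂ : ℝ → ℝ)
    (hξ₁ : ∀ y, ξ₁ y = k₁ * y + b₁) (hξ₂ : ∀ y, ξ₂ y = k₂ * y + b₂)
    (f₁ f₂ f₃ : ℝ → ℝ)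
    (hf₁ : ∀ y, f₁ y = 1 + H ^ 4 * Real.exp (2 * ξ₁ y - ψ₁))
    (hf₂ : ∀ y, f₂ y = Real.exp (ξ₁ y))
    (hf₃ : ∀ y, f₃ y = Real.exp (-ξ₂ y)) :
    ∀ y : ℝ,
      Matrix.det !![f₁ y, f₂ y, f₃ y;
                    deriv f₁ y, deriv f₂ y, deriv f₃ y;
                    deriv (deriv f₁) y, deriv (deriv f₂) y, deriv (deriv f₃) y]
        = -(k₁ + k₂) * Real.exp (ξ₁ y - ξ₂ y)
            * ((k₁ * k₂ + 2 * k₁ ^ 2) * H ^ 4 * Real.exp (2 * ξ₁ y - ψ₁)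
                - k₁ * k₂) := by
  have e1 : f₁ = fun y => 1 + H ^ 4 * Real.exp ((2 * k₁) * y + (2 * b₁ - ψ₁)) :=
    funext fun y => by rw [hf₁, hξ₁]; ring_nf
  have e2 : f₂ = fun y => Real.exp (k₁ * y + b₁) :=
    funext fun y => by rw [hf₂, hξ₁]
  have e3 : f₃ = fun y => Real.exp ((-k₂) * y + (-b₂)) :=
    funext fun y => by rw [hf₃, hξ₂]; ring_nf
  have hexp : ∀ (c d : ℝ) (y : ℝ),
      HasDerivAt (fun y : ℝ => Real.exp (c * y + d)) (c * Real.exp (c * y + d)) y := by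
    intro c d y
    simpa [mul_comm] using (hd_aff c d y).exp
  have d1 : deriv f₁ = fun y => H ^ 4 * ((2 * k₁) * Real.exp ((2 * k₁) * y + (2 * b₁ - ψ₁))) := by
    rw [e1]; funext y
    exact (((hexp (2 * k₁) (2 * b₁ - ψ₁) y).const_mul (H ^ 4)).const_add 1).deriv
  have d2 : deriv f₂ = fun y => k₁ * Real.exp (k₁ * y + b₁) := by
    rw [e2]; funext y; exact (hexp k₁ b₁ y).deriv
  have d3 : deriv f₃ = fun y => (-k₂) * Real.exp ((-k₂) * y + (-b₂)) := by
    rw [e3]; funext y; exact (hexp (-k₂) (-b₂) y).deriv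
  have dd1 : deriv (deriv f₁)
      = fun y => H ^ 4 * ((2 * k₁) * ((2 * k₁) * Real.exp ((2 * k₁) * y + (2 * b₁ - ψ₁)))) := by
    rw [d1]; funext y
    exact (((hexp (2 * k₁) (2 * b₁ - ψ₁) y).const_mul (2 * k₁)).const_mul (H ^ 4)).deriv
  have dd2 : deriv (deriv f₂) = fun y => k₁ * (k₁ * Real.exp (k₁ * y + b₁)) := by
    rw [d2]; funext y; exact ((hexp k₁ b₁ y).const_mul k₁).deriv
  have dd3 : deriv (deriv f₃) = fun y => (-k₂) * ((-k₂) * Real.exp ((-k₂) * y + (-b₂))) := by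
    rw [d3]; funext y; exact ((hexp (-k₂) (-b₂) y).const_mul (-k₂)).deriv
  intro y
  rw [dd1, dd2, dd3, d1, d2, d3, e1, e2, e3]
  simp [Matrix.det_fin_three]
  rw [hξ₁, hξ₂]
  have B : Real.exp (-(k₂ * y) + -b₂) = Real.exp (-(k₂ * y + b₂)) := by ring_nf
  have C : Real.exp (k₁ * y + b₁ - (k₂ * y + b₂))
      = Real.exp (k₁ * y + b₁) * Real.exp (-(k₂ * y + b₂)) := by
    rw [← Real.exp_add]; ring_nf
  rw [B, C]
  ring_nf
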